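/- arXiv:1807.03050 — 2 statements merged into one kernel-verified Lean document; each statement's English description precedes it below -/
import Mathlib

section
/- Let a, b be integers with 0 < b < a and let β be the unique real root greater than 1 of the polynomial P(X) = X^3 − aX^2 − bX + 1. Then L_⊗(β) ≥ 2; more precisely, there exist x, y ∈ ℤ_β with x·y ∈ fin(β) but β·(x·y) ∉ ℤ_β. -/
open Polynomial

/-- The β-transformation `T_β(x) = βx - ⌊βx⌋`. -/
noncomputable def betaT (β : ℝ) : ℝ → ℝ := fun x => β * x - ⌊β * x⌋

/-- `fin(β)`: reals `x` such that `|x|/β^N ∈ [0,1)` and the greedy expansion of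
`|x|/β^N` is finite, for some `N, n ∈ ℕ`. -/
def finBeta (β : ℝ) : Set ℝ :=
  {x | ∃ N n : ℕ, |x| / β ^ N ∈ Set.Ico (0 : ℝ) 1 ∧ (betaT β)^[n] (|x| / β ^ N) = 0}

/-- `ℤ_β`: the set of β-integers. -/
def betaInt (β : ℝ) : Set ℝ :=
  {x | ∃ N : ℕ, |x| / β ^ N ∈ Set.Ico (0 : ℝ) 1 ∧ (betaT β)^[N] (|x| / β ^ N) = 0}

/-- `L_⊕(β)`: the least `L ∈ ℕ` such that `β^L·(x+y) ∈ ℤ_β` for all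
`x, y ∈ ℤ_β` with `x + y ∈ fin(β)`. -/
noncomputable def Lplus (β : ℝ) : ℕ :=
  sInf {L : ℕ | ∀ x ∈ betaInt β, ∀ y ∈ betaInt β,
    x + y ∈ finBeta β → β ^ L * (x + y) ∈ betaInt β}

/-- `L_⊗(β)`: the least `L ∈ ℕ` such that `β^L·(x·y) ∈ ℤ_β` for all
`x, y ∈ ℤ_β` with `x·y ∈ fin(β)`. -/
noncomputable def Lmul (β : ℝ) : ℕ :=
  sInf {L : ℕ | ∀ x ∈ betaInt β, ∀ y ∈ betaInt β,
    x * y ∈ finBeta β → β ^ L * (x * y) ∈ betaInt β}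

section basic
variable {β : ℝ}

lemma betaT_eq_fract (u : ℝ) : betaT β u = Int.fract (β * u) := rfl

lemma betaT_mem (u : ℝ) : betaT β u ∈ Set.Ico (0:ℝ) 1 := by
  rw [betaT_eq_fract]; exact ⟨Int.fract_nonneg _, Int.fract_lt_one _⟩

lemma betaT_zero : betaT β 0 = 0 := by simp [betaT]

lemma iter_mem {u : ℝ} (hu : u ∈ Set.Ico (0:ℝ) 1) (n : ℕ) :
    (betaT β)^[n] u ∈ Set.Ico (0:ℝ) 1 := by
  induction n with
  | zero => exact hu
  | succ n ih => rw [Function.iterate_succ_apply']; exact betaT_mem _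

lemma iter_zero_of_le {u : ℝ} {m n : ℕ} (h : (betaT β)^[m] u = 0) (hmn : m ≤ n) :
    (betaT β)^[n] u = 0 := by
  obtain ⟨k, rfl⟩ := Nat.exists_eq_add_of_le hmn
  rw [add_comm, Function.iterate_add_apply, h, Function.iterate_fixed betaT_zero]

lemma Tstep {u v : ℝ} (d : ℤ) (h : β * u = d + v) (h0 : 0 ≤ v) (h1 : v < 1) :
    betaT β u = v := by
  have hf : ⌊β * u⌋ = d := by
    rw [h, Int.floor_intCast_add, Int.floor_eq_zero_iff.2 ⟨h0, h1⟩, add_zero]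
  show β * u - (⌊β * u⌋ : ℝ) = v
  rw [hf, h]; ring

variable (hβ : 1 < β)
include hβ

lemma Tscale {z : ℝ} (hz : 0 ≤ z) {N : ℕ} (h : z / β ^ N < 1) :
    betaT β (z / β ^ (N + 1)) = z / β ^ N := by
  have hβ0 : (0:ℝ) < β := lt_trans one_pos hβ
  apply Tstep 0
  · rw [pow_succ]
    push_cast
    field_simp
    ring
  · exact div_nonneg hz (pow_pos hβ0 _).le
  · exact h

lemma Tscale_iter {z : ℝ} (hz : 0 ≤ z) {N : ℕ} (h : z / β ^ N < 1) (k : ℕ) :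
    (betaT β)^[k] (z / β ^ (N + k)) = z / β ^ N := by
  induction k with
  | zero => simp
  | succ k ih =>
    rw [Function.iterate_succ_apply]
    have h2 : z / β ^ (N + k) < 1 := by
      have hle : β ^ N ≤ β ^ (N + k) := pow_le_pow_right₀ (le_of_lt hβ) (Nat.le_add_right _ _)
      calc z / β ^ (N + k) ≤ z / β ^ N := by
            have := pow_pos (lt_trans one_pos hβ) N
            gcongr
        _ < 1 := h
    have := Tscale hβ hz h2
    rw [show N + (k+1) = (N + k) + 1 from rfl, this, ih]

end basic

section digits
variable {β : ℝ} (hβ : 1 < β)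
include hβ

lemma digits {u : ℝ} (h0 : 0 ≤ u) (h1 : u < 1) (m : ℕ) :
    ∃ c : ℕ → ℤ, (∀ j, 0 ≤ c j ∧ c j ≤ ⌊β⌋) ∧
      β ^ m * u = (∑ j ∈ Finset.range m, (c j : ℝ) * β ^ j) + (betaT β)^[m] u := by
  induction m generalizing u with
  | zero =>
    refine ⟨fun _ => 0, fun j => ⟨le_refl _, ?_⟩, by simp⟩
    simpa using Int.floor_nonneg.2 (by linarith : (0:ℝ) ≤ β)
  | succ m ih =>
    have hβ0 : (0:ℝ) < β := lt_trans one_pos hβ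
    set e : ℤ := ⌊β * u⌋ with hedef
    have he0 : 0 ≤ e := Int.floor_nonneg.2 (mul_nonneg hβ0.le h0)
    have he1 : e ≤ ⌊β⌋ := Int.floor_le_floor (by nlinarith)
    have hv : betaT β u ∈ Set.Ico (0:ℝ) 1 := betaT_mem u
    obtain ⟨c, hc, heq⟩ := ih hv.1 hv.2
    refine ⟨fun j => if j = m then e else c j, fun j => ?_, ?_⟩
    · by_cases hj : j = m <;> simp [hj, he0, he1, hc]
    · rw [Function.iterate_succ_apply, Finset.sum_range_succ]
      have h1 : ∑ j ∈ Finset.range m, ((if j = m then e else c j : ℤ) : ℝ) * β ^ j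
          = ∑ j ∈ Finset.range m, (c j : ℝ) * β ^ j :=
        Finset.sum_congr rfl (fun j hj => by rw [if_neg (Finset.mem_range.1 hj).ne])
      rw [h1]
      simp only [if_pos rfl, if_true, eq_self_iff_true]
      have hbu : β * u = (e : ℝ) + betaT β u := by simp only [betaT, hedef]; ring
      have h2 : β ^ (m+1) * u = β ^ m * (β * u) := by ring
      rw [h2, hbu, mul_add, heq]
      ring

lemma mem_betaInt_of {z : ℝ} {N n : ℕ} (h1 : |z| < β ^ N)
    (h2 : (betaT β)^[n] (|z| / β ^ N) = 0) (hnN : n ≤ N) : z ∈ betaInt β := by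
  have hβ0 : (0:ℝ) < β := lt_trans one_pos hβ
  exact ⟨N, ⟨div_nonneg (abs_nonneg _) (pow_pos hβ0 _).le,
    (div_lt_one (pow_pos hβ0 _)).2 h1⟩, iter_zero_of_le h2 hnN⟩

lemma betaInt_digits {x : ℝ} (hx : x ∈ betaInt β) :
    ∃ N : ℕ, ∃ c : ℕ → ℤ, (∀ j, 0 ≤ c j ∧ c j ≤ ⌊β⌋) ∧ |x| < β ^ N ∧
      |x| = ∑ j ∈ Finset.range N, (c j : ℝ) * β ^ j := by
  obtain ⟨N, ⟨hm0, hm1⟩, horb⟩ := hx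
  have hβ0 : (0:ℝ) < β := lt_trans one_pos hβ
  have hpow : (0:ℝ) < β ^ N := pow_pos hβ0 _
  have hx1 : |x| < β ^ N := (div_lt_one hpow).1 hm1
  obtain ⟨c, hc, heq⟩ := digits hβ hm0 hm1 N
  rw [horb, add_zero] at heq
  refine ⟨N, c, hc, hx1, ?_⟩
  rw [← heq]; field_simp

end digits

section conj

lemma exists_roots (a b : ℤ) (hb : 0 < b) (hba : b < a) :
    ∃ γ δ : ℝ, γ ∈ Set.Ioo (0:ℝ) 1 ∧ δ ∈ Set.Ioo (-1:ℝ) 0 ∧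
      γ ^ 3 - (a:ℝ) * γ ^ 2 - (b:ℝ) * γ + 1 = 0 ∧
      δ ^ 3 - (a:ℝ) * δ ^ 2 - (b:ℝ) * δ + 1 = 0 := by
  have hb1 : (1:ℝ) ≤ (b:ℝ) := by exact_mod_cast hb
  have ha2 : (2:ℝ) ≤ (a:ℝ) := by
    have : (2:ℤ) ≤ a := by omega
    exact_mod_cast this
  set F : ℝ → ℝ := fun t => t ^ 3 - (a:ℝ) * t ^ 2 - (b:ℝ) * t + 1 with hF
  have hcont : Continuous F := by fun_prop
  have h1 : F 1 < 0 := by simp only [hF]; norm_num; linarith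
  have h0 : F 0 = 1 := by simp [hF]
  have hm1 : F (-1) < 0 := by
    simp only [hF]
    have : (b:ℝ) < (a:ℝ) := by exact_mod_cast hba
    norm_num; linarith
  have hγ : (0:ℝ) ∈ Set.Ioo (F 1) (F 0) := by rw [h0]; exact ⟨h1, one_pos⟩
  have hδ : (0:ℝ) ∈ Set.Ioo (F (-1)) (F 0) := by rw [h0]; exact ⟨hm1, one_pos⟩
  obtain ⟨γ, hγmem, hγ0⟩ := intermediate_value_Ioo' (by norm_num : (0:ℝ) ≤ 1)
    (hcont.continuousOn) hγ
  obtain ⟨δ, hδmem, hδ0⟩ := intermediate_value_Ioo (by norm_num : (-1:ℝ) ≤ 0)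
    (hcont.continuousOn) hδ
  exact ⟨γ, δ, hγmem, hδmem, hγ0, hδ0⟩

def trip (a b : ℤ) : ℕ → ℤ × ℤ × ℤ
  | 0 => (1, 0, 0)
  | 1 => (0, 1, 0)
  | 2 => (0, 0, 1)
  | (k+3) => a • trip a b (k+2) + b • trip a b (k+1) - trip a b k

noncomputable def evq (t : ℝ) (v : ℤ × ℤ × ℤ) : ℝ :=
  (v.1 : ℝ) + (v.2.1 : ℝ) * t + (v.2.2 : ℝ) * t ^ 2

lemma evq_add (t : ℝ) (u v : ℤ × ℤ × ℤ) : evq t (u + v) = evq t u + evq t v := by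
  simp only [evq, Prod.fst_add, Prod.snd_add]
  push_cast; ring

lemma evq_sub (t : ℝ) (u v : ℤ × ℤ × ℤ) : evq t (u - v) = evq t u - evq t v := by
  simp only [evq, Prod.fst_sub, Prod.snd_sub]
  push_cast; ring

lemma evq_smul (t : ℝ) (n : ℤ) (v : ℤ × ℤ × ℤ) : evq t (n • v) = (n : ℝ) * evq t v := by
  simp only [evq, Prod.smul_fst, Prod.smul_snd, smul_eq_mul]
  push_cast; ring

lemma evq_sum {ι : Type*} (t : ℝ) (s : Finset ι) (f : ι → ℤ × ℤ × ℤ) :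
    evq t (∑ i ∈ s, f i) = ∑ i ∈ s, evq t (f i) := by
  classical
  induction s using Finset.cons_induction with
  | empty => simp [evq]
  | cons i s hi ih => rw [Finset.sum_cons, Finset.sum_cons, evq_add, ih]

lemma evq_trip {a b : ℤ} {t : ℝ} (ht : t ^ 3 = (a:ℝ) * t ^ 2 + (b:ℝ) * t - 1) :
    ∀ k, evq t (trip a b k) = t ^ k := by
  intro k
  induction k using Nat.strong_induction_on with
  | _ k ih =>
    match k with
    | 0 => simp [trip, evq]
    | 1 => simp [trip, evq]
    | 2 => simp [trip, evq]
    | (m+3) =>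
      rw [show trip a b (m+3) = a • trip a b (m+2) + b • trip a b (m+1) - trip a b m from rfl]
      rw [evq_sub, evq_add, evq_smul, evq_smul,
        ih (m+2) (by omega), ih (m+1) (by omega), ih m (by omega)]
      have h1 : t ^ (m+3) = t ^ m * t ^ 3 := by ring
      rw [h1, ht]; ring

lemma geo_le {g : ℝ} (hg0 : 0 ≤ g) (hg1 : g < 1) (N : ℕ) :
    ∑ j ∈ Finset.range N, g ^ j ≤ (1 - g)⁻¹ := by
  induction N with
  | zero => simp only [Finset.range_zero, Finset.sum_empty]; exact inv_nonneg.2 (by linarith)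
  | succ N ih =>
    have h1g : (0:ℝ) < 1 - g := by linarith
    rw [Finset.sum_range_succ']
    have : ∑ j ∈ Finset.range N, g ^ (j + 1) = g * ∑ j ∈ Finset.range N, g ^ j := by
      rw [Finset.mul_sum]; apply Finset.sum_congr rfl; intro j _; ring
    rw [this]
    have h2 : g * ∑ j ∈ Finset.range N, g ^ j ≤ g * (1 - g)⁻¹ :=
      mul_le_mul_of_nonneg_left ih hg0
    have h3 : g * (1-g)⁻¹ + 1 ≤ (1-g)⁻¹ := by
      rw [← sub_nonneg]
      have : (1-g)⁻¹ - (g * (1-g)⁻¹ + 1) = 0 := by field_simp; ring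
      rw [this]
  -- fix below
    simp only [pow_zero]
    linarith

lemma digit_sum_bound {g t : ℝ} (hg0 : 0 ≤ g) (hg1 : g < 1) (ht : |t| ≤ g)
    {c : ℕ → ℤ} {B : ℤ} (hc : ∀ j, 0 ≤ c j ∧ c j ≤ B) (N : ℕ) :
    |∑ j ∈ Finset.range N, (c j : ℝ) * t ^ j| ≤ (B : ℝ) * (1 - g)⁻¹ := by
  have hB0 : (0:ℝ) ≤ (B:ℝ) := by
    have := (hc 0).1.trans (hc 0).2
    exact_mod_cast this
  calc |∑ j ∈ Finset.range N, (c j : ℝ) * t ^ j|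
      ≤ ∑ j ∈ Finset.range N, |(c j : ℝ) * t ^ j| := Finset.abs_sum_le_sum_abs _ _
    _ ≤ ∑ j ∈ Finset.range N, (B : ℝ) * g ^ j := by
        apply Finset.sum_le_sum
        intro j _
        rw [abs_mul, abs_pow]
        apply mul_le_mul
        · rw [abs_of_nonneg (by exact_mod_cast (hc j).1 : (0:ℝ) ≤ (c j : ℝ))]
          exact_mod_cast (hc j).2
        · exact pow_le_pow_left₀ (abs_nonneg t) ht j
        · positivity
        · exact hB0
    _ = (B : ℝ) * ∑ j ∈ Finset.range N, g ^ j := by rw [Finset.mul_sum]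
    _ ≤ (B : ℝ) * (1 - g)⁻¹ := mul_le_mul_of_nonneg_left (geo_le hg0 hg1 N) hB0

end conj

section boxfin

lemma abs_le_of_mul_eq {A E A' D : ℝ} (hD : 0 < D) (h : A * D = E) (hE : |E| ≤ A') :
    |A| ≤ A' / D := by
  rw [le_div_iff₀ hD]
  calc |A| * D = |A| * |D| := by rw [abs_of_pos hD]
    _ = |A * D| := (abs_mul _ _).symm
    _ = |E| := by rw [h]
    _ ≤ A' := hE

lemma box_finite {β γ δ : ℝ} (hγβ : γ < β) (hδγ : δ < γ) (C : ℝ) :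
    {v : ℤ × ℤ × ℤ | |evq β v| ≤ 1 ∧ |evq γ v| ≤ C ∧ |evq δ v| ≤ C}.Finite := by
  have hβγ : (0:ℝ) < β - γ := by linarith
  have hγδ : (0:ℝ) < γ - δ := by linarith
  have hβδ : (0:ℝ) < β - δ := by linarith
  set K2 : ℝ := ((1 + C) / (β - γ) + (C + C) / (γ - δ)) / (β - δ) with hK2
  set K1 : ℝ := (1 + C) / (β - γ) + |K2| * |β + γ| with hK1
  set K0 : ℝ := 1 + |K1| * |β| + |K2| * β ^ 2 with hK0
  set K : ℝ := max (max |K0| |K1|) |K2| with hK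
  set m : ℤ := ⌈K⌉ with hm
  apply Set.Finite.subset (Finset.Icc ((-m, -m, -m) : ℤ × ℤ × ℤ) (m, m, m)).finite_toSet
  rintro ⟨p, q, r⟩ ⟨h1, h2, h3⟩
  have hevβ : evq β (p, q, r) = (p:ℝ) + (q:ℝ) * β + (r:ℝ) * β ^ 2 := rfl
  have hevγ : evq γ (p, q, r) = (p:ℝ) + (q:ℝ) * γ + (r:ℝ) * γ ^ 2 := rfl
  have hevδ : evq δ (p, q, r) = (p:ℝ) + (q:ℝ) * δ + (r:ℝ) * δ ^ 2 := rfl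
  rw [hevβ] at h1; rw [hevγ] at h2; rw [hevδ] at h3
  have habs : ∀ X Y : ℝ, |X - Y| ≤ |X| + |Y| := fun X Y => abs_sub X Y
  have hD1 : |(q:ℝ) + (r:ℝ) * (β + γ)| ≤ (1 + C) / (β - γ) :=
    abs_le_of_mul_eq hβγ
      (show ((q:ℝ) + (r:ℝ) * (β + γ)) * (β - γ)
          = ((p:ℝ) + (q:ℝ) * β + (r:ℝ) * β ^ 2) - ((p:ℝ) + (q:ℝ) * γ + (r:ℝ) * γ ^ 2) by ring)
      ((habs _ _).trans (add_le_add h1 h2))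
  have hD2 : |(q:ℝ) + (r:ℝ) * (γ + δ)| ≤ (C + C) / (γ - δ) :=
    abs_le_of_mul_eq hγδ
      (show ((q:ℝ) + (r:ℝ) * (γ + δ)) * (γ - δ)
          = ((p:ℝ) + (q:ℝ) * γ + (r:ℝ) * γ ^ 2) - ((p:ℝ) + (q:ℝ) * δ + (r:ℝ) * δ ^ 2) by ring)
      ((habs _ _).trans (add_le_add h2 h3))
  have hr : |(r:ℝ)| ≤ K2 :=
    abs_le_of_mul_eq hβδ
      (show (r:ℝ) * (β - δ)
          = ((q:ℝ) + (r:ℝ) * (β + γ)) - ((q:ℝ) + (r:ℝ) * (γ + δ)) by ring)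
      ((habs _ _).trans (add_le_add hD1 hD2))
  have hq : |(q:ℝ)| ≤ K1 := by
    have hqe : (q:ℝ) = ((q:ℝ) + (r:ℝ) * (β + γ)) - (r:ℝ) * (β + γ) := by ring
    rw [hqe, hK1]
    refine (habs _ _).trans (add_le_add hD1 ?_)
    rw [abs_mul]
    exact mul_le_mul_of_nonneg_right (hr.trans (le_abs_self _)) (abs_nonneg _)
  have hp : |(p:ℝ)| ≤ K0 := by
    have hpe : (p:ℝ) = ((p:ℝ) + (q:ℝ) * β + (r:ℝ) * β ^ 2) - (q:ℝ) * β - (r:ℝ) * β ^ 2 := by ring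
    rw [hpe, hK0]
    refine (habs _ _).trans (add_le_add ((habs _ _).trans (add_le_add h1 ?_)) ?_)
    · rw [abs_mul]
      exact mul_le_mul_of_nonneg_right (hq.trans (le_abs_self _)) (abs_nonneg _)
    · rw [abs_mul, abs_pow, sq_abs]
      exact mul_le_mul_of_nonneg_right (hr.trans (le_abs_self _)) (sq_nonneg _)
  have hKp : |(p:ℝ)| ≤ K := hp.trans ((le_abs_self _).trans ((le_max_left _ _).trans (le_max_left _ _)))
  have hKq : |(q:ℝ)| ≤ K := hq.trans ((le_abs_self _).trans ((le_max_right _ _).trans (le_max_left _ _)))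
  have hKr : |(r:ℝ)| ≤ K := hr.trans ((le_abs_self _).trans (le_max_right _ _))
  have hbound : ∀ z : ℤ, |(z:ℝ)| ≤ K → -m ≤ z ∧ z ≤ m := by
    intro z hz
    have h1z : |(z:ℝ)| ≤ (m:ℝ) := hz.trans (Int.le_ceil K)
    rw [abs_le] at h1z
    constructor
    · exact_mod_cast h1z.1
    · exact_mod_cast h1z.2
  simp only [Finset.coe_Icc, Set.mem_Icc, Prod.mk_le_mk]
  obtain ⟨hp1, hp2⟩ := hbound p hKp
  obtain ⟨hq1, hq2⟩ := hbound q hKq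
  obtain ⟨hr1, hr2⟩ := hbound r hKr
  exact ⟨⟨hp1, hq1, hr1⟩, hp2, hq2, hr2⟩

end boxfin

section main

theorem S_mem (a b : ℤ) (hb : 0 < b) (hba : b < a) {β : ℝ} (hβ : 1 < β)
    (hroot : β ^ 3 - (a : ℝ) * β ^ 2 - (b : ℝ) * β + 1 = 0) :
    ∃ L : ℕ, ∀ x ∈ betaInt β, ∀ y ∈ betaInt β,
      x * y ∈ finBeta β → β ^ L * (x * y) ∈ betaInt β := by
  classical
  have hβ0 : (0:ℝ) < β := lt_trans one_pos hβ
  obtain ⟨γ, δ, hγm, hδm, hγr, hδr⟩ := exists_roots a b hb hba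
  set g : ℝ := max γ (-δ) with hg
  have hg0 : 0 ≤ g := le_trans hγm.1.le (le_max_left _ _)
  have hg1 : g < 1 := max_lt hγm.2 (by linarith [hδm.1])
  have hγg : |γ| ≤ g := by rw [abs_of_pos hγm.1]; exact le_max_left _ _
  have hδg : |δ| ≤ g := by rw [abs_of_neg hδm.2]; exact le_max_right _ _
  set M : ℝ := (⌊β⌋ : ℝ) * (1 - g)⁻¹ with hM
  have hfl1 : (1:ℤ) ≤ ⌊β⌋ := Int.le_floor.2 (by exact_mod_cast hβ.le)
  have hM0 : 0 ≤ M := by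
    apply mul_nonneg
    · exact_mod_cast (by linarith [hfl1] : (0:ℤ) ≤ ⌊β⌋)
    · exact inv_nonneg.2 (by linarith)
  set C : ℝ := M * M + M with hC
  set Box : Set (ℤ × ℤ × ℤ) :=
    {v | |evq β v| ≤ 1 ∧ |evq γ v| ≤ C ∧ |evq δ v| ≤ C} with hBox
  have hfin : Box.Finite := box_finite (lt_trans hγm.2 hβ) (lt_trans hδm.2 hγm.1) C
  have hFfin : (evq β '' Box).Finite := hfin.image _
  set L : ℕ := hFfin.toFinset.sup
    (fun f => if h : ∃ k, (betaT β)^[k] f = 0 then Nat.find h else 0) with hL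
  refine ⟨L, ?_⟩
  intro x hx y hy hfinm
  obtain ⟨N₁, c, hc, hxlt, hxeq⟩ := betaInt_digits hβ hx
  obtain ⟨N₂, c', hc', hylt, hyeq⟩ := betaInt_digits hβ hy
  set w : ℝ := |x| * |y| with hw
  have hwxy : |x * y| = w := abs_mul x y
  have hw0 : 0 ≤ w := mul_nonneg (abs_nonneg _) (abs_nonneg _)
  set N : ℕ := N₁ + N₂ with hN
  have hwlt : w < β ^ N := by
    rw [hN, pow_add]
    exact mul_lt_mul'' hxlt hylt (abs_nonneg _) (abs_nonneg _)
  have hu0 : 0 ≤ w / β ^ N := div_nonneg hw0 (pow_pos hβ0 _).le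
  have hu1 : w / β ^ N < 1 := (div_lt_one (pow_pos hβ0 _)).2 hwlt
  obtain ⟨d, hd, hdeq⟩ := digits hβ hu0 hu1 N
  set f : ℝ := (betaT β)^[N] (w / β ^ N) with hf
  have hfIco : f ∈ Set.Ico (0:ℝ) 1 := iter_mem ⟨hu0, hu1⟩ N
  have hfeq : f = w - ∑ j ∈ Finset.range N, (d j : ℝ) * β ^ j := by
    have hcan : β ^ N * (w / β ^ N) = w := by field_simp
    rw [hcan] at hdeq
    linarith [hdeq]
  -- triples
  set vw : ℤ × ℤ × ℤ := ∑ j ∈ Finset.range N₁, ∑ k ∈ Finset.range N₂,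
    (c j * c' k) • trip a b (j + k) with hvw
  set vA : ℤ × ℤ × ℤ := ∑ j ∈ Finset.range N, d j • trip a b j with hvA
  set vf : ℤ × ℤ × ℤ := vw - vA with hvf
  have hev : ∀ t : ℝ, t ^ 3 = (a:ℝ) * t ^ 2 + (b:ℝ) * t - 1 →
      evq t vf = (∑ j ∈ Finset.range N₁, (c j : ℝ) * t ^ j) *
        (∑ k ∈ Finset.range N₂, (c' k : ℝ) * t ^ k)
        - ∑ j ∈ Finset.range N, (d j : ℝ) * t ^ j := by
    intro t ht
    rw [hvf, evq_sub, hvw, hvA, evq_sum, evq_sum]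
    have h1 : ∀ j, evq t (∑ k ∈ Finset.range N₂, (c j * c' k) • trip a b (j + k))
        = ∑ k ∈ Finset.range N₂, (c j : ℝ) * t ^ j * ((c' k : ℝ) * t ^ k) := by
      intro j
      rw [evq_sum]
      apply Finset.sum_congr rfl
      intro k _
      rw [evq_smul, evq_trip ht]
      push_cast
      rw [pow_add]
      ring
    have h2 : ∀ j, evq t (d j • trip a b j) = (d j : ℝ) * t ^ j := by
      intro j
      rw [evq_smul, evq_trip ht]
    rw [Finset.sum_congr rfl (fun j _ => h1 j), Finset.sum_congr rfl (fun j _ => h2 j),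
      Finset.sum_mul_sum]
  have hrootβ : β ^ 3 = (a:ℝ) * β ^ 2 + (b:ℝ) * β - 1 := by linarith
  have hrootγ : γ ^ 3 = (a:ℝ) * γ ^ 2 + (b:ℝ) * γ - 1 := by linarith
  have hrootδ : δ ^ 3 = (a:ℝ) * δ ^ 2 + (b:ℝ) * δ - 1 := by linarith
  have hfval : evq β vf = f := by
    rw [hev β hrootβ, ← hxeq, ← hyeq, hfeq, hw]
  have hboundt : ∀ t : ℝ, |t| ≤ g → t ^ 3 = (a:ℝ) * t ^ 2 + (b:ℝ) * t - 1 →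
      |evq t vf| ≤ C := by
    intro t htg ht
    rw [hev t ht]
    have b1 := digit_sum_bound hg0 hg1 htg hc N₁
    have b2 := digit_sum_bound hg0 hg1 htg hc' N₂
    have b3 := digit_sum_bound hg0 hg1 htg hd N
    calc |(∑ j ∈ Finset.range N₁, (c j : ℝ) * t ^ j) *
        (∑ k ∈ Finset.range N₂, (c' k : ℝ) * t ^ k)
        - ∑ j ∈ Finset.range N, (d j : ℝ) * t ^ j|
        ≤ |(∑ j ∈ Finset.range N₁, (c j : ℝ) * t ^ j) *
          (∑ k ∈ Finset.range N₂, (c' k : ℝ) * t ^ k)|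
          + |∑ j ∈ Finset.range N, (d j : ℝ) * t ^ j| := abs_sub _ _
      _ ≤ M * M + M := by
          apply add_le_add _ b3
          rw [abs_mul]
          exact mul_le_mul b1 b2 (abs_nonneg _) hM0
  have hmemBox : vf ∈ Box := by
    refine ⟨?_, hboundt γ hγg hrootγ, hboundt δ hδg hrootδ⟩
    rw [hfval, abs_of_nonneg hfIco.1]
    exact hfIco.2.le
  have hmemF : f ∈ evq β '' Box := ⟨vf, hmemBox, hfval⟩
  -- finite orbit of f
  obtain ⟨N', n', hIco', horb'⟩ := hfinm
  rw [hwxy] at hIco' horb'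
  have hw1' : w / β ^ N' < 1 := (Set.mem_Ico.1 hIco').2
  have hkey : ∃ k, (betaT β)^[k] f = 0 := by
    refine ⟨n', ?_⟩
    rcases le_total N' N with hcase | hcase
    · have hscale : (betaT β)^[N - N'] (w / β ^ N) = w / β ^ N' := by
        have := Tscale_iter hβ hw0 hw1' (N - N')
        rwa [Nat.add_sub_cancel' hcase] at this
      have e1 : (betaT β)^[n'] f = (betaT β)^[n' + N] (w / β ^ N) := by
        rw [hf, ← Function.iterate_add_apply]
      rw [e1, show n' + N = (n' + N') + (N - N') by omega,
        Function.iterate_add_apply, hscale,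
        show n' + N' = N' + n' by omega, Function.iterate_add_apply, horb',
        Function.iterate_fixed betaT_zero]
    · have hscale : (betaT β)^[N' - N] (w / β ^ N') = w / β ^ N := by
        have := Tscale_iter hβ hw0 hu1 (N' - N)
        rwa [Nat.add_sub_cancel' hcase] at this
      have e1 : f = (betaT β)^[N'] (w / β ^ N') := by
        rw [hf, ← hscale, ← Function.iterate_add_apply,
          Nat.add_sub_cancel' hcase]
      rw [e1, ← Function.iterate_add_apply,
        show n' + N' = N' + n' by omega, Function.iterate_add_apply, horb',
        Function.iterate_fixed betaT_zero]
  set k₀ : ℕ := Nat.find hkey with hk₀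
  have hk₀spec : (betaT β)^[k₀] f = 0 := Nat.find_spec hkey
  have hk₀L : k₀ ≤ L := by
    have hmemT : f ∈ hFfin.toFinset := hFfin.mem_toFinset.2 hmemF
    have h1 : (if h : ∃ k, (betaT β)^[k] f = 0 then Nat.find h else 0) = k₀ := dif_pos hkey
    rw [hL, ← h1]
    exact Finset.le_sup (f := fun f => if h : ∃ k, (betaT β)^[k] f = 0 then Nat.find h else 0) hmemT
  -- conclude
  have habs2 : |β ^ L * (x * y)| = β ^ L * w := by
    rw [abs_mul, abs_pow, abs_of_pos hβ0, hwxy]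
  apply mem_betaInt_of hβ (N := N + L) (n := N + k₀)
  · rw [habs2, pow_add]
    have : β ^ L * w < β ^ L * β ^ N :=
      mul_lt_mul_of_pos_left hwlt (pow_pos hβ0 _)
    calc β ^ L * w < β ^ L * β ^ N := this
      _ = β ^ N * β ^ L := by ring
  · have hdiv : |β ^ L * (x * y)| / β ^ (N + L) = w / β ^ N := by
      rw [habs2, pow_add]
      field_simp
    rw [hdiv, show N + k₀ = k₀ + N by omega, Function.iterate_add_apply, ← hf, hk₀spec]
  · omega

end main

section witness

variable {β : ℝ}

lemma betaInt_mul_beta (hβ : 1 < β) {z : ℝ} (hz : z ∈ betaInt β) : β * z ∈ betaInt β := by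
  have hβ0 : (0:ℝ) < β := lt_trans one_pos hβ
  obtain ⟨N, hIco, horb⟩ := hz
  refine ⟨N + 1, ?_, ?_⟩
  · have habs : |β * z| = β * |z| := by rw [abs_mul, abs_of_pos hβ0]
    have he : |β * z| / β ^ (N+1) = |z| / β ^ N := by
      rw [habs, pow_succ]
      field_simp
    rw [he]; exact hIco
  · have habs : |β * z| = β * |z| := by rw [abs_mul, abs_of_pos hβ0]
    have he : |β * z| / β ^ (N+1) = |z| / β ^ N := by
      rw [habs, pow_succ]; field_simp
    rw [he, Function.iterate_succ_apply', horb, betaT_zero]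

lemma chain1 (u v : ℝ) (n : ℕ) (h1 : betaT β u = v) (h2 : (betaT β)^[n] v = 0) :
    (betaT β)^[n+1] u = 0 := by rw [Function.iterate_succ_apply, h1, h2]

lemma chain2 (u v : ℝ) (n : ℕ) (h1 : betaT β u = v) :
    (betaT β)^[n+1] u = (betaT β)^[n] v := by rw [Function.iterate_succ_apply, h1]

set_option maxHeartbeats 2000000 in
lemma witness_all (a b : ℤ) (hb : 0 < b) (hba : b < a) (hβ : 1 < β)
    (hroot : β ^ 3 - (a : ℝ) * β ^ 2 - (b : ℝ) * β + 1 = 0) :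
    ∃ x ∈ betaInt β, ∃ y ∈ betaInt β,
      x * y ∈ finBeta β ∧ β * (x * y) ∉ betaInt β := by
  have hβ0 : (0:ℝ) < β := lt_trans one_pos hβ
  have hβne : β ≠ 0 := hβ0.ne'
  have hb1 : (1:ℝ) ≤ (b:ℝ) := by exact_mod_cast hb
  have hba' : (b:ℝ) + 1 ≤ (a:ℝ) := by exact_mod_cast hba
  have ha2 : (2:ℝ) ≤ (a:ℝ) := by linarith
  -- a < β
  have hβa : (a:ℝ) < β := by
    by_contra hcon
    push_neg at hcon
    have key : β ^ 2 * (β - (a:ℝ)) = (b:ℝ) * β - 1 := by linear_combination hroot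
    nlinarith [sq_nonneg β, mul_nonneg (sub_nonneg.2 hb1) (by linarith : (0:ℝ) ≤ β),
      mul_nonneg (sq_nonneg β) (sub_nonneg.2 hcon)]
  have hβ2 : (2:ℝ) < β := lt_of_le_of_lt ha2 hβa
  -- key3 : (a-1)β + a < β^2
  have key3 : ((a:ℝ) - 1) * β + (a:ℝ) < β ^ 2 := by
    nlinarith [mul_pos (sub_pos.2 hβa) (by linarith : (0:ℝ) < β + 1)]
  set cR : ℝ := (a:ℝ) - (b:ℝ) - 1 with hcR
  have hc0 : 0 ≤ cR := by simp only [hcR]; linarith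
  have hc2 : cR ≤ (a:ℝ) - 2 := by simp only [hcR]; linarith
  have haβ2 : (a:ℝ) * β ^ 2 < β ^ 3 := by nlinarith [mul_pos (sub_pos.2 hβa) (pow_pos hβ0 2)]
  have haβ3 : (a:ℝ) * β ^ 3 < β ^ 4 := by nlinarith [mul_pos (sub_pos.2 hβa) (pow_pos hβ0 3)]
  have haβ4 : (a:ℝ) * β ^ 4 < β ^ 5 := by nlinarith [mul_pos (sub_pos.2 hβa) (pow_pos hβ0 4)]
  -- numerator bounds
  have hu3num : cR * β + 1 < β ^ 2 := by
    have h1 : cR * β ≤ ((a:ℝ) - 2) * β := mul_le_mul_of_nonneg_right hc2 hβ0.le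
    nlinarith
  have hu2num : (b:ℝ) * β ^ 2 + cR * β + 1 < β ^ 3 := by
    have h1 : (b:ℝ) * β ^ 2 ≤ ((a:ℝ) - 1) * β ^ 2 :=
      mul_le_mul_of_nonneg_right (by linarith) (pow_pos hβ0 2).le
    nlinarith
  have hu1num : β ^ 3 + (b:ℝ) * β ^ 2 + cR * β + 1 < β ^ 4 := by
    have h2 : 2 * β ^ 3 < β ^ 4 := by nlinarith [pow_pos hβ0 3]
    nlinarith
  have hu0num : ((a:ℝ) - 1) * β ^ 4 + β ^ 3 + (b:ℝ) * β ^ 2 + cR * β + 1 < β ^ 5 := by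
    nlinarith
  -- the witnesses
  set X : ℝ := (a:ℝ) with hX
  set Y : ℝ := ((a:ℝ) - 1) * β + ((b:ℝ) + 1) with hY
  have hX0 : 0 ≤ X := by linarith
  have hY0 : 0 ≤ Y := by
    have : 0 ≤ ((a:ℝ)-1)*β := mul_nonneg (by linarith) hβ0.le
    simp only [hY]; linarith
  have hZ0 : 0 ≤ X * Y := mul_nonneg hX0 hY0
  -- X ∈ betaInt
  have hXmem : X ∈ betaInt β := by
    refine ⟨1, ⟨div_nonneg (abs_nonneg _) (by positivity), ?_⟩, ?_⟩
    · rw [abs_of_nonneg hX0, pow_one, div_lt_one hβ0]; exact hβa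
    · rw [abs_of_nonneg hX0, pow_one]
      have h1 : betaT β (X / β) = 0 := by
        apply Tstep a _ le_rfl one_pos
        rw [hX]; field_simp; ring
      exact chain1 _ _ 0 h1 rfl
  -- Y ∈ betaInt
  have hYlt : Y < β ^ 2 := by simp only [hY]; nlinarith
  have hYmem : Y ∈ betaInt β := by
    refine ⟨2, ⟨div_nonneg (abs_nonneg _) (by positivity), ?_⟩, ?_⟩
    · rw [abs_of_nonneg hY0, div_lt_one (by positivity)]; exact hYlt
    · rw [abs_of_nonneg hY0]
      have h1 : betaT β (Y / β ^ 2) = ((b:ℝ) + 1) / β := by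
        apply Tstep (a - 1)
        · push_cast; rw [hY]; field_simp
        · positivity
        · rw [div_lt_one hβ0]; linarith
      have h2 : betaT β (((b:ℝ) + 1) / β) = 0 := by
        apply Tstep (b + 1) _ le_rfl one_pos
        push_cast; field_simp; ring
      exact chain1 _ _ 1 h1 (chain1 _ _ 0 h2 rfl)
  -- Z and its orbit
  have hZnum : X * Y = (((a:ℝ) - 1) * β ^ 4 + β ^ 3 + (b:ℝ) * β ^ 2 + cR * β + 1) / β ^ 2 := by
    rw [eq_div_iff (pow_ne_zero _ hβne), hX, hY, hcR]
    linear_combination ((1 - (a:ℝ)) * β - 1) * hroot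
  set nm : ℝ := ((a:ℝ) - 1) * β ^ 4 + β ^ 3 + (b:ℝ) * β ^ 2 + cR * β + 1 with hnm
  have hnm0 : 0 < nm := by
    have h1 : 0 ≤ ((a:ℝ)-1)*β^4 := mul_nonneg (by linarith) (by positivity)
    have h2 : 0 ≤ (b:ℝ)*β^2 := mul_nonneg (by linarith) (by positivity)
    have h3 : 0 ≤ cR*β := mul_nonneg hc0 hβ0.le
    simp only [hnm]; positivity
  set u0 : ℝ := nm / β ^ 5 with hu0
  set u1 : ℝ := (β ^ 3 + (b:ℝ) * β ^ 2 + cR * β + 1) / β ^ 4 with hu1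
  set u2 : ℝ := ((b:ℝ) * β ^ 2 + cR * β + 1) / β ^ 3 with hu2
  set u3 : ℝ := (cR * β + 1) / β ^ 2 with hu3
  set u4 : ℝ := 1 / β with hu4
  have hn1 : (0:ℝ) < β ^ 3 + (b:ℝ) * β ^ 2 + cR * β + 1 := by
    have h2 : 0 ≤ (b:ℝ)*β^2 := mul_nonneg (by linarith) (by positivity)
    have h3 : 0 ≤ cR*β := mul_nonneg hc0 hβ0.le
    positivity
  have hn2 : (0:ℝ) < (b:ℝ) * β ^ 2 + cR * β + 1 := by
    have h2 : 0 ≤ (b:ℝ)*β^2 := mul_nonneg (by linarith) (by positivity)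
    have h3 : 0 ≤ cR*β := mul_nonneg hc0 hβ0.le
    positivity
  have hn3 : (0:ℝ) < cR * β + 1 := by
    have h3 : 0 ≤ cR*β := mul_nonneg hc0 hβ0.le
    positivity
  have o1 : betaT β u0 = u1 := by
    apply Tstep (a - 1)
    · push_cast; rw [hu0, hu1, hnm]; field_simp; ring
    · rw [hu1]; positivity
    · rw [hu1, div_lt_one (by positivity)]; exact hu1num
  have o2 : betaT β u1 = u2 := by
    apply Tstep 1
    · push_cast; rw [hu1, hu2]; field_simp; ring
    · rw [hu2]; positivity
    · rw [hu2, div_lt_one (by positivity)]; exact hu2num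
  have o3 : betaT β u2 = u3 := by
    apply Tstep b
    · push_cast; rw [hu2, hu3]; field_simp; ring
    · rw [hu3]; positivity
    · rw [hu3, div_lt_one (by positivity)]; exact hu3num
  have o4 : betaT β u3 = u4 := by
    apply Tstep (a - b - 1)
    · push_cast; rw [hu3, hu4, hcR]; field_simp; ring
    · rw [hu4]; positivity
    · rw [hu4, div_lt_one hβ0]; exact hβ
  have o5 : betaT β u4 = 0 := by
    apply Tstep 1 _ le_rfl one_pos
    push_cast; rw [hu4]; field_simp; ring
  have orb5 : (betaT β)^[5] u0 = 0 :=
    chain1 _ _ 4 o1 (chain1 _ _ 3 o2 (chain1 _ _ 2 o3 (chain1 _ _ 1 o4 (chain1 _ _ 0 o5 rfl))))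
  have orb4 : (betaT β)^[4] u0 = u4 :=
    (chain2 _ _ 3 o1).trans ((chain2 _ _ 2 o2).trans ((chain2 _ _ 1 o3).trans (chain2 _ _ 0 o4)))
  have hZdiv : X * Y / β ^ 3 = u0 := by
    rw [hZnum, hu0, div_div, ← pow_add]
  -- X*Y ∈ finBeta
  have hZfin : X * Y ∈ finBeta β := by
    refine ⟨3, 5, ⟨div_nonneg (abs_nonneg _) (by positivity), ?_⟩, ?_⟩
    · rw [abs_of_nonneg hZ0, hZdiv, hu0, div_lt_one (by positivity)]
      simp only [hnm]; exact hu0num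
    · rw [abs_of_nonneg hZ0, hZdiv]; exact orb5
  -- β * (X*Y) ∉ betaInt
  have hβZlow : β ^ 3 ≤ β * (X * Y) := by
    have h1 : β * (X * Y) = nm / β := by rw [hZnum]; field_simp
    rw [h1, le_div_iff₀ hβ0]
    have h2 : 0 ≤ ((a:ℝ)-2)*β^4 := mul_nonneg (by linarith) (by positivity)
    have h3 : 0 ≤ (b:ℝ)*β^2 := mul_nonneg (by linarith) (by positivity)
    have h4 : 0 ≤ cR*β := mul_nonneg hc0 hβ0.le
    simp only [hnm]; nlinarith
  have hβZhigh : β * (X * Y) < β ^ 4 := by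
    have h1 : β * (X * Y) = nm / β := by rw [hZnum]; field_simp
    rw [h1, div_lt_iff₀ hβ0]
    have : β ^ 4 * β = β ^ 5 := by ring
    rw [this]
    simp only [hnm]; exact hu0num
  have hβZdiv : β * (X * Y) / β ^ 4 = u0 := by
    rw [hZnum, hu0]; field_simp
  have hZnot : β * (X * Y) ∉ betaInt β := by
    rintro ⟨N, ⟨hIco0, hIco1⟩, horb⟩
    have hβZ0 : 0 ≤ β * (X * Y) := mul_nonneg hβ0.le hZ0
    rw [abs_of_nonneg hβZ0] at hIco1 horb
    have hNβ : β * (X * Y) < β ^ N := (div_lt_one (by positivity)).1 hIco1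
    have h3N : 3 < N := by
      by_contra hN
      push_neg at hN
      have : β ^ N ≤ β ^ 3 := pow_le_pow_right₀ hβ.le hN
      linarith
    have hscale : (betaT β)^[N - 4] (β * (X * Y) / β ^ N) = β * (X * Y) / β ^ 4 := by
      have h4 : β * (X * Y) / β ^ 4 < 1 := (div_lt_one (by positivity)).2 hβZhigh
      have := Tscale_iter hβ hβZ0 h4 (N - 4)
      rwa [show 4 + (N - 4) = N by omega] at this
    have hfin : (betaT β)^[N] (β * (X * Y) / β ^ N) = u4 := by
      have e : (betaT β)^[N] (β * (X * Y) / β ^ N)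
          = (betaT β)^[4] ((betaT β)^[N - 4] (β * (X * Y) / β ^ N)) := by
        rw [← Function.iterate_add_apply, show 4 + (N - 4) = N by omega]
      rw [e, hscale, hβZdiv, orb4]
    rw [horb] at hfin
    have : (0:ℝ) < u4 := by rw [hu4]; positivity
    rw [← hfin] at this
    exact lt_irrefl 0 this
  exact ⟨X, hXmem, Y, hYmem, hZfin, hZnot⟩

end witness

theorem stmt12 (a b : ℤ) (hb : 0 < b) (hba : b < a) (β : ℝ) (hβ : 1 < β)
    (hroot : β ^ 3 - (a : ℝ) * β ^ 2 - (b : ℝ) * β + 1 = 0) :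
    2 ≤ Lmul β ∧
    ∃ x ∈ betaInt β, ∃ y ∈ betaInt β,
      x * y ∈ finBeta β ∧ β * (x * y) ∉ betaInt β := by
  obtain ⟨x, hx, y, hy, hfin, hnot⟩ := witness_all a b hb hba hβ hroot
  constructor
  · set S : Set ℕ := {L : ℕ | ∀ x ∈ betaInt β, ∀ y ∈ betaInt β,
      x * y ∈ finBeta β → β ^ L * (x * y) ∈ betaInt β} with hS
    have hne : S.Nonempty := S_mem a b hb hba hβ hroot
    have hmem : sInf S ∈ S := Nat.sInf_mem hne
    by_contra hcon
    push_neg at hcon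
    have hL : Lmul β = sInf S := rfl
    rw [hL] at hcon
    have h0 : sInf S ≤ 1 := by omega
    rcases Nat.le_one_iff_eq_zero_or_eq_one.1 h0 with h | h
    · have h2 := hmem x hx y hy hfin
      rw [h, pow_zero, one_mul] at h2
      exact hnot (betaInt_mul_beta hβ h2)
    · have h2 := hmem x hx y hy hfin
      rw [h, pow_one] at h2
      exact hnot h2
  · exact ⟨x, hx, y, hy, hfin, hnot⟩
end

section
/- Let a, b be integers with 0 ≤ b ≤ a − 3 and suppose the polynomial P(X) = X^3 − aX^2 + bX + 1 has three real roots β, β', β'' with β > 1, 0 < β' < 1 and −1 < β'' < 0. Then β' ≤ (b + √(a−1) + 2/√(a−1)) / (a−1). -/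
open Polynomial

set_option maxHeartbeats 1000000 in
theorem stmt17 (a b : ℤ) (hb0 : 0 ≤ b) (hba : b ≤ a - 3) (β β' β'' : ℝ)
    (hβ : 1 < β) (hβ' : β' ∈ Set.Ioo (0 : ℝ) 1) (hβ'' : β'' ∈ Set.Ioo (-1 : ℝ) 0)
    (hroots : ∀ x : ℝ, x ^ 3 - (a : ℝ) * x ^ 2 + (b : ℝ) * x + 1
      = (x - β) * (x - β') * (x - β'')) :
    β' ≤ ((b : ℝ) + Real.sqrt ((a : ℝ) - 1) + 2 / Real.sqrt ((a : ℝ) - 1))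
          / ((a : ℝ) - 1) := by
  obtain ⟨hβ'0, hβ'1⟩ := hβ'
  obtain ⟨hβ''0, hβ''1⟩ := hβ''
  have ha3 : (3 : ℝ) ≤ (a : ℝ) := by
    have : (3 : ℤ) ≤ a := by omega
    exact_mod_cast this
  have hb0' : (0 : ℝ) ≤ (b : ℝ) := by exact_mod_cast hb0
  have hA1 : (0 : ℝ) < (a : ℝ) - 1 := by linarith
  set A : ℝ := (a : ℝ) with hA_def
  set B : ℝ := (b : ℝ) with hB_def
  set s : ℝ := Real.sqrt (A - 1) with hs_def
  have hs2 : s ^ 2 = A - 1 := Real.sq_sqrt hA1.le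
  have hs0 : 0 < s := Real.sqrt_pos.mpr hA1
  set u : ℝ := 1 / s with hu_def
  have hu0 : 0 < u := by positivity
  have hsu : s * u = 1 := by rw [hu_def, mul_one_div, div_self hs0.ne']
  -- Vieta: product of roots is -1
  have e3 : β * β' * β'' = -1 := by nlinarith [hroots 0]
  -- β < A
  have hβA : β < A := by
    by_contra h
    push_neg at h
    have h1 := hroots A
    nlinarith [mul_pos (show (0:ℝ) < A - β' by linarith) (show (0:ℝ) < A - β'' by linarith)]
  -- -β'' < u
  have hβ''u : -β'' < u := by
    by_contra h
    push_neg at h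
    have h1 := hroots (-u)
    have hAu : A * u ^ 2 = 1 + u ^ 2 := by
      have : (s * u) ^ 2 = 1 := by rw [hsu]; norm_num
      nlinarith [this]
    nlinarith [mul_pos (show (0:ℝ) < u + β by linarith) (show (0:ℝ) < u + β' by linarith),
      mul_nonneg hu0.le hb0']
  -- P(β') = 0
  have hP : β' ^ 3 - A * β' ^ 2 + B * β' + 1 = 0 := by
    have := hroots β'
    nlinarith [this]
  -- β * (-β'') * β' = 1
  have h2 : β * (-β'') * β' = 1 := by nlinarith [e3]
  -- A * u = s + u
  have h4 : A * u = s + u := by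
    rw [hu_def]
    field_simp
    nlinarith [hs2]
  -- 1 < s * β' + u * β'
  have h1' : β * (-β'') < A * u := by
    nlinarith [mul_pos (show (0:ℝ) < -β'' by linarith) (show (0:ℝ) < A - β by linarith),
      mul_pos hu0 (show (0:ℝ) < β by linarith)]
  have h5 : 1 < s * β' + u * β' := by nlinarith [h1', h2, h4, hβ'0]
  rw [le_div_iff₀ hA1]
  have h2u : 2 / s = 2 * u := by rw [hu_def]; ring
  rw [h2u]
  nlinarith [hP, h5, hβ'0, hβ'1, hu0, mul_pos hβ'0 hβ'0,
    mul_nonneg (mul_nonneg hβ'0.le hβ'0.le) (show (0:ℝ) ≤ 1 - β' by linarith)]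
end
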